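/- Let $G$ be a perfect group, $N$ a normal subgroup of $G$, and $d\in\mathbb{N}$. Let $S=\Gamma_1(G,N)\leq G^{\mathcal{P}([d])}$. Then for every $k\in\{1,\dots,d+1\}$, the $k$-th term of the lower central series of $S$ equals $\Gamma_k(G,N)$: $\gamma_k(S)=\Gamma_k(G,N)$. -/

import Mathlib

set_option linter.unusedSectionVars false
set_option linter.unusedVariables false


/-- The homomorphism `Δ_A : G → G^(𝒫[d])`, where `Δ_A(u)(B) = u` if `A ⊆ B` and `1`
otherwise. Coordinates of the direct power are indexed by `Finset (Fin d)`. -/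
def Delta {G : Type*} [Group G] (d : ℕ) (A : Finset (Fin d)) :
    G →* (Finset (Fin d) → G) where
  toFun u := fun B => if A ⊆ B then u else 1
  map_one' := by funext B; simp
  map_mul' u v := by
    funext B
    by_cases h : A ⊆ B <;> simp [Pi.mul_apply, h]

/-- The left-normed iterated commutator subgroup `[G, ᵐN]`:
`[G, ⁰N] = G` (i.e. `⊤`) and `[G, ᵐ⁺¹N] = [[G, ᵐN], N]`. -/
def iterComm {G : Type*} [Group G] (N : Subgroup G) : ℕ → Subgroup G
  | 0 => ⊤
  | m + 1 => ⁅iterComm N m, N⁆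

/-- The lower central series of a subgroup `N`, as subgroups of the ambient group:
`γ₁(N) = N` is `gammaN N 0`, and `γ_{l+1}(N) = [γ_l(N), N]` is `gammaN N l`. -/
def gammaN {G : Type*} [Group G] (N : Subgroup G) : ℕ → Subgroup G
  | 0 => N
  | l + 1 => ⁅gammaN N l, N⁆

/-- The subgroup `Γ_k(G,N)` of `G^(𝒫[d])`, generated by the `Δ_A([G, ^{|A|}N])` with
`|A| < k` together with the `Δ_A(γ_{|A|}(N))` with `|A| ≥ k`. -/
def GammaSub {G : Type*} [Group G] (d : ℕ) (N : Subgroup G) (k : ℕ) :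
    Subgroup (Finset (Fin d) → G) :=
  ⨆ A : Finset (Fin d),
    if A.card < k then (iterComm N A.card).map (Delta d A)
    else (gammaN N (A.card - 1)).map (Delta d A)

open Subgroup
open scoped commutatorElement

section Generic

variable {H : Type*} [Group H]

/-- commutator-transporter on the right, cut down to the normalizer. -/
def commRight (M : Subgroup H) (s : H) : Subgroup H where
  carrier := {g | g ∈ (Subgroup.normalizer (M : Set H)) ∧ ⁅s, g⁆ ∈ M}
  one_mem' := ⟨(Subgroup.normalizer (M : Set H)).one_mem, by simpa using M.one_mem⟩
  mul_mem' := by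
    rintro g₁ g₂ ⟨n₁, m₁⟩ ⟨n₂, m₂⟩
    refine ⟨(Subgroup.normalizer (M : Set H)).mul_mem n₁ n₂, ?_⟩
    have e : ⁅s, g₁ * g₂⁆ = ⁅s, g₁⁆ * (g₁ * ⁅s, g₂⁆ * g₁⁻¹) := by group
    rw [e]
    exact M.mul_mem m₁ ((Subgroup.mem_normalizer_iff.mp n₁ _).mp m₂)
  inv_mem' := by
    rintro g ⟨n, m⟩
    refine ⟨(Subgroup.normalizer (M : Set H)).inv_mem n, ?_⟩
    have e : ⁅s, g⁻¹⁆ = g⁻¹ * ⁅s, g⁆⁻¹ * g := by group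
    rw [e]
    have := (Subgroup.mem_normalizer_iff.mp ((Subgroup.normalizer (M : Set H)).inv_mem n) _).mp (M.inv_mem m)
    simpa using this

/-- commutator-transporter on the left, cut down to the normalizer. -/
def commLeft (M : Subgroup H) (T : Set H) : Subgroup H where
  carrier := {g | g ∈ (Subgroup.normalizer (M : Set H)) ∧ ∀ t ∈ T, ⁅g, t⁆ ∈ M}
  one_mem' := ⟨(Subgroup.normalizer (M : Set H)).one_mem, fun t ht => by simpa using M.one_mem⟩
  mul_mem' := by
    rintro g₁ g₂ ⟨n₁, m₁⟩ ⟨n₂, m₂⟩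
    refine ⟨(Subgroup.normalizer (M : Set H)).mul_mem n₁ n₂, fun t ht => ?_⟩
    have e : ⁅g₁ * g₂, t⁆ = (g₁ * ⁅g₂, t⁆ * g₁⁻¹) * ⁅g₁, t⁆ := by group
    rw [e]
    exact M.mul_mem ((Subgroup.mem_normalizer_iff.mp n₁ _).mp (m₂ t ht)) (m₁ t ht)
  inv_mem' := by
    rintro g ⟨n, m⟩
    refine ⟨(Subgroup.normalizer (M : Set H)).inv_mem n, fun t ht => ?_⟩
    have e : ⁅g⁻¹, t⁆ = g⁻¹ * ⁅g, t⁆⁻¹ * g := by group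
    rw [e]
    have := (Subgroup.mem_normalizer_iff.mp ((Subgroup.normalizer (M : Set H)).inv_mem n) _).mp (M.inv_mem (m t ht))
    simpa using this

theorem commutator_closure_le {S T : Set H} {M : Subgroup H}
    (hS : S ⊆ (Subgroup.normalizer (M : Set H))) (hT : T ⊆ (Subgroup.normalizer (M : Set H)))
    (h : ∀ s ∈ S, ∀ t ∈ T, ⁅s, t⁆ ∈ M) :
    ⁅Subgroup.closure S, Subgroup.closure T⁆ ≤ M := by
  have h1 : ∀ s ∈ S, Subgroup.closure T ≤ commRight M s := fun s hs =>
    (Subgroup.closure_le _).mpr (fun t ht => ⟨hT ht, h s hs t ht⟩)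
  have h2 : Subgroup.closure S ≤ commLeft M (Subgroup.closure T : Set H) :=
    (Subgroup.closure_le _).mpr (fun s hs => ⟨hS hs, fun t ht => ((h1 s hs) ht).2⟩)
  rw [Subgroup.commutator_le]
  intro g₁ hg₁ g₂ hg₂
  exact (h2 hg₁).2 g₂ hg₂

/-- Three subgroups lemma, general target. -/
theorem three_subgroups {H₁ H₂ H₃ M : Subgroup H} [hM : M.Normal]
    (h1 : ⁅⁅H₂, H₃⁆, H₁⁆ ≤ M) (h2 : ⁅⁅H₃, H₁⁆, H₂⁆ ≤ M) : ⁅⁅H₁, H₂⁆, H₃⁆ ≤ M := by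
  have key : ∀ x ∈ H₁, ∀ y ∈ H₂, ∀ z ∈ H₃, ⁅⁅x, y⁆, z⁆ ∈ M := by
    intro x hx y hy z hz
    have hB : ⁅y, ⁅z⁻¹, x⁻¹⁆⁆ ∈ M := by
      refine h2 ?_
      rw [Subgroup.commutator_comm]
      exact Subgroup.commutator_mem_commutator hy
        (Subgroup.commutator_mem_commutator (H₃.inv_mem hz) (H₁.inv_mem hx))
    have hC : ⁅x⁻¹, ⁅y⁻¹, z⁆⁆ ∈ M := by
      refine h1 ?_
      rw [Subgroup.commutator_comm]
      exact Subgroup.commutator_mem_commutator (H₁.inv_mem hx)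
        (Subgroup.commutator_mem_commutator (H₂.inv_mem hy) hz)
    have e : ⁅z, ⁅x, y⁆⁆ =
        x * ((z * ⁅y, ⁅z⁻¹, x⁻¹⁆⁆⁻¹ * z⁻¹) * (y * ⁅x⁻¹, ⁅y⁻¹, z⁆⁆⁻¹ * y⁻¹)) * x⁻¹ := by
      group
    have hmem : ⁅z, ⁅x, y⁆⁆ ∈ M := by
      rw [e]
      exact hM.conj_mem _ (M.mul_mem (hM.conj_mem _ (M.inv_mem hB) z)
        (hM.conj_mem _ (M.inv_mem hC) y)) x
    have : ⁅⁅x, y⁆, z⁆ = ⁅z, ⁅x, y⁆⁆⁻¹ := (commutatorElement_inv z ⁅x, y⁆).symm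
    rw [this]
    exact M.inv_mem hmem
  have hnorm : (Subgroup.normalizer (M : Set H)) = ⊤ := Subgroup.normalizer_eq_top_iff.mpr hM
  have step : ⁅H₁, H₂⁆ ≤ commLeft M (H₃ : Set H) := by
    rw [Subgroup.commutator_le]
    intro x hx y hy
    exact ⟨by simp [hnorm], fun z hz => key x hx y hy z hz⟩
  rw [Subgroup.commutator_le]
  intro w hw z hz
  exact (step hw).2 z hz

end Generic

section IterGamma

variable {G : Type*} [Group G] (N : Subgroup G) [hN : N.Normal]

theorem iterComm_normal : ∀ m, (iterComm N m).Normal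
  | 0 => by rw [show iterComm N 0 = ⊤ from rfl]; infer_instance
  | m + 1 => by
    haveI := iterComm_normal m
    rw [show iterComm N (m + 1) = ⁅iterComm N m, N⁆ from rfl]
    infer_instance

theorem gammaN_normal : ∀ l, (gammaN N l).Normal
  | 0 => hN
  | l + 1 => by
    haveI := gammaN_normal l
    rw [show gammaN N (l + 1) = ⁅gammaN N l, N⁆ from rfl]
    infer_instance

theorem iterComm_succ_le (m : ℕ) : iterComm N (m + 1) ≤ iterComm N m := by
  haveI := iterComm_normal N m
  exact Subgroup.commutator_le_left _ _

theorem iterComm_antitone : Antitone (iterComm N) :=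
  antitone_nat_of_succ_le (iterComm_succ_le N)

theorem gammaN_succ_le (l : ℕ) : gammaN N (l + 1) ≤ gammaN N l := by
  haveI := gammaN_normal N l
  exact Subgroup.commutator_le_left _ _

theorem gammaN_antitone : Antitone (gammaN N) :=
  antitone_nat_of_succ_le (gammaN_succ_le N)

theorem gammaN_le_iterComm : ∀ l, gammaN N l ≤ iterComm N l
  | 0 => le_top
  | l + 1 => Subgroup.commutator_mono (gammaN_le_iterComm l) le_rfl

theorem iterComm_le_gammaN : ∀ l, iterComm N (l + 1) ≤ gammaN N l
  | 0 => by
    haveI := hN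
    exact Subgroup.commutator_le_right _ _
  | l + 1 => Subgroup.commutator_mono (iterComm_le_gammaN l) le_rfl

/-- Key lemma: `⁅[G,ᵃN], γ_{l+1}(N)⁆ ≤ [G, ^{a+l+1}N]`. -/
theorem comm_iterComm_gammaN : ∀ l a, ⁅iterComm N a, gammaN N l⁆ ≤ iterComm N (a + l + 1)
  | 0, a => le_of_eq rfl
  | l + 1, a => by
    haveI := iterComm_normal N (a + l + 2)
    have h1 : ⁅⁅N, iterComm N a⁆, gammaN N l⁆ ≤ iterComm N (a + l + 2) := by
      rw [Subgroup.commutator_comm N (iterComm N a)]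
      calc ⁅⁅iterComm N a, N⁆, gammaN N l⁆ = ⁅iterComm N (a + 1), gammaN N l⁆ := rfl
        _ ≤ iterComm N (a + 1 + l + 1) := comm_iterComm_gammaN l (a + 1)
        _ = iterComm N (a + l + 2) := by ring_nf
    have h2 : ⁅⁅iterComm N a, gammaN N l⁆, N⁆ ≤ iterComm N (a + l + 2) := by
      calc ⁅⁅iterComm N a, gammaN N l⁆, N⁆ ≤ ⁅iterComm N (a + l + 1), N⁆ :=
            Subgroup.commutator_mono (comm_iterComm_gammaN l a) le_rfl
        _ = iterComm N (a + l + 2) := rfl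
    have h3 : ⁅⁅gammaN N l, N⁆, iterComm N a⁆ ≤ iterComm N (a + l + 2) :=
      three_subgroups h1 h2
    calc ⁅iterComm N a, gammaN N (l + 1)⁆ = ⁅⁅gammaN N l, N⁆, iterComm N a⁆ := by
          rw [Subgroup.commutator_comm]; rfl
      _ ≤ iterComm N (a + l + 2) := h3
    
theorem comm_gammaN_gammaN : ∀ m l, ⁅gammaN N l, gammaN N m⁆ ≤ gammaN N (l + m + 1)
  | 0, l => le_of_eq rfl
  | m + 1, l => by
    haveI := gammaN_normal N (l + m + 2)
    have h1 : ⁅⁅N, gammaN N l⁆, gammaN N m⁆ ≤ gammaN N (l + m + 2) := by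
      rw [Subgroup.commutator_comm N (gammaN N l)]
      calc ⁅⁅gammaN N l, N⁆, gammaN N m⁆ = ⁅gammaN N (l + 1), gammaN N m⁆ := rfl
        _ ≤ gammaN N (l + 1 + m + 1) := comm_gammaN_gammaN m (l + 1)
        _ = gammaN N (l + m + 2) := by ring_nf
    have h2 : ⁅⁅gammaN N l, gammaN N m⁆, N⁆ ≤ gammaN N (l + m + 2) := by
      calc ⁅⁅gammaN N l, gammaN N m⁆, N⁆ ≤ ⁅gammaN N (l + m + 1), N⁆ :=
            Subgroup.commutator_mono (comm_gammaN_gammaN m l) le_rfl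
        _ = gammaN N (l + m + 2) := rfl
    have h3 : ⁅⁅gammaN N m, N⁆, gammaN N l⁆ ≤ gammaN N (l + m + 2) :=
      three_subgroups h1 h2
    calc ⁅gammaN N l, gammaN N (m + 1)⁆ = ⁅⁅gammaN N m, N⁆, gammaN N l⁆ := by
          rw [Subgroup.commutator_comm]; rfl
      _ ≤ gammaN N (l + m + 2) := h3

/-- coefficient subgroup of `Γ_k` at a set of cardinality `a`. -/
def coeffSub (k a : ℕ) : Subgroup G := if a < k then iterComm N a else gammaN N (a - 1)

theorem coeffSub_le_gammaN {k a : ℕ} (ha : 1 ≤ a) : coeffSub N k a ≤ gammaN N (a - 1) := by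
  unfold coeffSub
  split
  · have : a = (a - 1) + 1 := by omega
    rw [this]
    exact iterComm_le_gammaN N (a - 1)
  · exact le_rfl

theorem coeffSub_anti {k k' a : ℕ} (hk : 1 ≤ k) (hkk : k ≤ k') :
    coeffSub N k' a ≤ coeffSub N k a := by
  unfold coeffSub
  split
  · split
    · exact le_rfl
    · rename_i h1 h2
      have : a = (a - 1) + 1 := by omega
      rw [this]
      exact iterComm_le_gammaN N (a - 1)
  · split
    · omega
    · exact le_rfl

/-- the key coefficientwise commutator estimate. -/
theorem coeff_comm {j a b c : ℕ} (hj : 1 ≤ j) (hac : a ≤ c) (hbc : b ≤ c)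
    (hcab : c ≤ a + b) : ⁅coeffSub N j a, coeffSub N 1 b⁆ ≤ coeffSub N (j + 1) c := by
  by_cases hb : b = 0
  · -- second argument is ⊤, and c = a
    subst hb
    have hca : c = a := by omega
    subst hca
    have htop : coeffSub N 1 0 = ⊤ := by simp [coeffSub, iterComm]
    rw [htop]
    unfold coeffSub
    split
    · rename_i ha
      haveI := iterComm_normal N c
      have : c < j + 1 := by omega
      rw [if_pos this]
      exact Subgroup.commutator_le_left _ _
    · rename_i ha
      by_cases hcj : c < j + 1
      · -- c = j, target iterComm N j, use key lemma with a = 0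
        have hcj' : c = j := by omega
        subst hcj'
        rw [if_pos hcj, Subgroup.commutator_comm]
        calc ⁅(⊤ : Subgroup G), gammaN N (c - 1)⁆ = ⁅iterComm N 0, gammaN N (c - 1)⁆ := rfl
          _ ≤ iterComm N (0 + (c - 1) + 1) := comm_iterComm_gammaN N (c - 1) 0
          _ = iterComm N c := by congr 1; omega
      · rw [if_neg hcj]
        haveI := gammaN_normal N (c - 1)
        exact Subgroup.commutator_le_left _ _
  · -- b ≥ 1 : second argument is gammaN N (b-1)
    have hb1 : 1 ≤ b := by omega
    have h2 : coeffSub N 1 b = gammaN N (b - 1) := by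
      unfold coeffSub; rw [if_neg (by omega)]
    rw [h2]
    by_cases hc : c < j + 1
    · -- target iterComm N c
      rw [show coeffSub N (j+1) c = iterComm N c by unfold coeffSub; rw [if_pos hc]]
      by_cases ha : a < j
      · rw [show coeffSub N j a = iterComm N a by unfold coeffSub; rw [if_pos ha]]
        calc ⁅iterComm N a, gammaN N (b-1)⁆ ≤ iterComm N (a + (b - 1) + 1) :=
              comm_iterComm_gammaN N (b - 1) a
          _ ≤ iterComm N c := iterComm_antitone N (by omega)
      · rw [show coeffSub N j a = gammaN N (a - 1) by unfold coeffSub; rw [if_neg ha]]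
        have ha1 : 1 ≤ a := by omega
        calc ⁅gammaN N (a-1), gammaN N (b-1)⁆
            ≤ ⁅iterComm N (a-1), gammaN N (b-1)⁆ :=
              Subgroup.commutator_mono (gammaN_le_iterComm N (a-1)) le_rfl
          _ ≤ iterComm N ((a-1) + (b - 1) + 1) := comm_iterComm_gammaN N (b - 1) (a - 1)
          _ ≤ iterComm N c := iterComm_antitone N (by omega)
    · -- target gammaN N (c-1)
      rw [show coeffSub N (j+1) c = gammaN N (c - 1) by unfold coeffSub; rw [if_neg hc]]
      by_cases ha0 : a = 0
      · subst ha0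
        have : coeffSub N j 0 = ⊤ := by
          unfold coeffSub; rw [if_pos (by omega)]; rfl
        rw [this]
        haveI := gammaN_normal N (b - 1)
        have hbc' : c = b := by omega
        subst hbc'
        exact Subgroup.commutator_le_right _ _
      · have ha1 : 1 ≤ a := by omega
        calc ⁅coeffSub N j a, gammaN N (b-1)⁆
            ≤ ⁅gammaN N (a-1), gammaN N (b-1)⁆ :=
              Subgroup.commutator_mono (coeffSub_le_gammaN N ha1) le_rfl
          _ ≤ gammaN N ((a-1) + (b-1) + 1) := comm_gammaN_gammaN N (b-1) (a-1)
          _ ≤ gammaN N (c - 1) := gammaN_antitone N (by omega)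

theorem coeffSub_succ {k a : ℕ} (hk : 1 ≤ k) :
    coeffSub N (k + 1) (a + 1) = ⁅coeffSub N k a, N⁆ := by
  unfold coeffSub
  by_cases h : a < k
  · rw [if_pos (by omega), if_pos h]
    rfl
  · rw [if_neg (by omega), if_neg h]
    have h1 : a + 1 - 1 = (a - 1) + 1 := by omega
    rw [h1]
    rfl

end IterGamma

section Gamma

variable {G : Type*} [Group G] (N : Subgroup G) [hN : N.Normal] (d : ℕ)

theorem Delta_commutator (A B : Finset (Fin d)) (u v : G) :
    ⁅Delta d A u, Delta d B v⁆ = Delta d (A ∪ B) ⁅u, v⁆ := by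
  funext C
  simp only [commutatorElement_def, Delta, MonoidHom.coe_mk, OneHom.coe_mk,
    Pi.mul_apply, Pi.inv_apply]
  by_cases hA : A ⊆ C <;> by_cases hB : B ⊆ C <;>
    simp [Finset.union_subset_iff, hA, hB, commutatorElement_def]

theorem GammaSub_eq (k : ℕ) :
    GammaSub d N k = ⨆ A : Finset (Fin d), (coeffSub N k A.card).map (Delta d A) := by
  unfold GammaSub coeffSub
  congr 1
  funext A
  split <;> rfl

theorem Delta_mem_Gamma {k : ℕ} {A : Finset (Fin d)} {u : G}
    (hu : u ∈ coeffSub N k A.card) : Delta d A u ∈ GammaSub d N k := by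
  rw [GammaSub_eq]
  exact le_iSup (fun A : Finset (Fin d) => (coeffSub N k A.card).map (Delta d A)) A
    (Subgroup.mem_map_of_mem _ hu)

theorem GammaSub_eq_closure (k : ℕ) :
    GammaSub d N k =
      Subgroup.closure (⋃ A : Finset (Fin d), Delta d A '' (coeffSub N k A.card : Set G)) := by
  rw [GammaSub_eq, Subgroup.closure_iUnion]
  congr 1
  funext A
  rw [← MonoidHom.map_closure, Subgroup.closure_eq]

/-- conjugation by a generator of `Γ₁` preserves `Γ_{k+1}`. -/
theorem Delta_conj_mem {k : ℕ} (hk : 1 ≤ k) {B : Finset (Fin d)} {v : G}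
    (hv : v ∈ coeffSub N 1 B.card) {x : Finset (Fin d) → G}
    (hx : x ∈ GammaSub d N (k + 1)) :
    (Delta d B v) * x * (Delta d B v)⁻¹ ∈ GammaSub d N (k + 1) := by
  revert x
  suffices h : GammaSub d N (k+1) ≤
      Subgroup.comap (MulAut.conj (Delta d B v)).toMonoidHom (GammaSub d N (k+1)) by
    intro x hx
    have := h hx
    simpa [MulAut.conj_apply] using this
  conv_lhs => rw [GammaSub_eq]
  refine iSup_le fun A => ?_
  rw [Subgroup.map_le_iff_le_comap]
  intro u hu
  simp only [Subgroup.mem_comap]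
  show Delta d B v * Delta d A u * (Delta d B v)⁻¹ ∈ GammaSub d N (k + 1)
  have e : Delta d B v * Delta d A u * (Delta d B v)⁻¹ =
      ⁅Delta d B v, Delta d A u⁆ * Delta d A u := by group
  rw [e, Delta_commutator]
  refine Subgroup.mul_mem _ (Delta_mem_Gamma N d ?_) (Delta_mem_Gamma N d hu)
  have h1 : ⁅v, u⁆ ∈ ⁅coeffSub N 1 B.card, coeffSub N (k+1) A.card⁆ :=
    Subgroup.commutator_mem_commutator hv hu
  have h2 : ⁅coeffSub N 1 B.card, coeffSub N (k+1) A.card⁆ ≤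
      coeffSub N (k+1) (B ∪ A).card := by
    rw [Subgroup.commutator_comm]
    calc ⁅coeffSub N (k+1) A.card, coeffSub N 1 B.card⁆
        ≤ ⁅coeffSub N k A.card, coeffSub N 1 B.card⁆ :=
          Subgroup.commutator_mono (coeffSub_anti N hk (Nat.le_succ k)) le_rfl
      _ ≤ coeffSub N (k+1) (B ∪ A).card := by
          refine coeff_comm N hk ?_ ?_ ?_
          · exact Finset.card_le_card Finset.subset_union_right
          · exact Finset.card_le_card Finset.subset_union_left
          · have := Finset.card_union_le B A
            omega
  exact h2 h1

theorem Delta_mem_normalizer {k : ℕ} (hk : 1 ≤ k) {B : Finset (Fin d)} {v : G}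
    (hv : v ∈ coeffSub N 1 B.card) :
    Delta d B v ∈ (Subgroup.normalizer (GammaSub d N (k + 1) : Set (Finset (Fin d) → G))) := by
  rw [Subgroup.mem_normalizer_iff]
  intro x
  constructor
  · exact fun hx => Delta_conj_mem N d hk hv hx
  · intro hx
    have hv' : v⁻¹ ∈ coeffSub N 1 B.card := (coeffSub N 1 B.card).inv_mem hv
    have := Delta_conj_mem N d hk hv' hx
    rw [map_inv] at this
    simpa [mul_assoc] using this

/-- The main induction step : `⁅Γ_k, Γ_1⁆ = Γ_{k+1}`. -/
theorem Gamma_step (hperf : ⁅(⊤ : Subgroup G), (⊤ : Subgroup G)⁆ = ⊤)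
    {k : ℕ} (hk : 1 ≤ k) :
    ⁅GammaSub d N k, GammaSub d N 1⁆ = GammaSub d N (k + 1) := by
  apply le_antisymm
  · -- ≤
    rw [GammaSub_eq_closure N d k, GammaSub_eq_closure N d 1]
    apply commutator_closure_le
    · rintro s hs
      simp only [Set.mem_iUnion, Set.mem_image, SetLike.mem_coe] at hs
      obtain ⟨A, u, hu, rfl⟩ := hs
      exact Delta_mem_normalizer N d hk (coeffSub_anti N le_rfl hk hu)
    · rintro t ht
      simp only [Set.mem_iUnion, Set.mem_image, SetLike.mem_coe] at ht
      obtain ⟨B, v, hv, rfl⟩ := ht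
      exact Delta_mem_normalizer N d hk hv
    · rintro s hs t ht
      simp only [Set.mem_iUnion, Set.mem_image, SetLike.mem_coe] at hs ht
      obtain ⟨A, u, hu, rfl⟩ := hs
      obtain ⟨B, v, hv, rfl⟩ := ht
      rw [Delta_commutator]
      refine Delta_mem_Gamma N d ?_
      refine coeff_comm N hk ?_ ?_ ?_ (Subgroup.commutator_mem_commutator hu hv)
      · exact Finset.card_le_card Finset.subset_union_left
      · exact Finset.card_le_card Finset.subset_union_right
      · have := Finset.card_union_le A B
        omega
  · -- ≥
    rw [GammaSub_eq N d (k+1)]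
    refine iSup_le fun A => ?_
    rcases h : A.card with _ | a
    · -- A = ∅, coefficient is ⊤
      have hA : A = ∅ := Finset.card_eq_zero.mp h
      subst hA
      have hcoeff : coeffSub N (k+1) (0:ℕ) = ⊤ := by
        unfold coeffSub
        rw [if_pos (by omega)]
        rfl
      have hc1 : coeffSub N k ((∅ : Finset (Fin d)).card) = ⊤ := by
        unfold coeffSub
        simp only [Finset.card_empty]
        exact if_pos (by omega)
      have hc2 : coeffSub N 1 ((∅ : Finset (Fin d)).card) = ⊤ := by
        unfold coeffSub
        simp only [Finset.card_empty]
        exact if_pos (by omega)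
      rw [hcoeff, ← hperf, Subgroup.map_commutator]
      refine Subgroup.commutator_mono ?_ ?_
      · rw [Subgroup.map_le_iff_le_comap]
        intro u hu
        exact Delta_mem_Gamma N d (by rw [hc1]; trivial)
      · rw [Subgroup.map_le_iff_le_comap]
        intro u hu
        exact Delta_mem_Gamma N d (by rw [hc2]; trivial)
    · -- A.card = a + 1
      have hne : A.Nonempty := Finset.card_pos.mp (by omega)
      obtain ⟨i, hi⟩ := hne
      have hcard : (A.erase i).card = a := by
        rw [Finset.card_erase_of_mem hi, h]
        omega
      have hunion : A.erase i ∪ {i} = A := by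
        rw [Finset.union_comm, ← Finset.insert_eq, Finset.insert_erase hi]
      rw [coeffSub_succ N hk, Subgroup.map_le_iff_le_comap, Subgroup.commutator_le]
      intro x hx y hy
      simp only [Subgroup.mem_comap]
      rw [← hunion, ← Delta_commutator]
      refine Subgroup.commutator_mem_commutator ?_ ?_
      · refine Delta_mem_Gamma N d ?_
        rw [hcard]
        exact hx
      · refine Delta_mem_Gamma N d ?_
        show y ∈ coeffSub N 1 ({i} : Finset (Fin d)).card
        rw [Finset.card_singleton]
        show y ∈ coeffSub N 1 1
        unfold coeffSub
        rw [if_neg (by omega)]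
        exact hy

end Gamma

/-- **Lemma (lcc).** If `G` is perfect then for `S = Γ₁(G,N)` and every
`k ∈ {1, …, d+1}` we have `γ_k(S) = Γ_k(G,N)`; here `γ_k(S)` is `gammaN S (k-1)`. -/
theorem gammaN_GammaSub_one_eq_GammaSub
    {G : Type*} [Group G] (hperf : ⁅(⊤ : Subgroup G), (⊤ : Subgroup G)⁆ = ⊤)
    (N : Subgroup G) [N.Normal] {d : ℕ} (hd : 0 < d)
    (k : ℕ) (hk1 : 1 ≤ k) (hk2 : k ≤ d + 1) :
    gammaN (GammaSub d N 1) (k - 1) = GammaSub d N k := by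
  obtain ⟨m, rfl⟩ : ∃ m, k = m + 1 := ⟨k - 1, by omega⟩
  simp only [Nat.add_sub_cancel]
  clear hk1 hk2
  induction m with
  | zero => rfl
  | succ m ih =>
    show ⁅gammaN (GammaSub d N 1) m, GammaSub d N 1⁆ = GammaSub d N (m + 1 + 1)
    rw [ih]
    exact Gamma_step N d hperf (Nat.succ_le_succ (Nat.zero_le m))
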